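/- T₀ = O ∪ {∅}: a regular language is accepted by some DFA with zero semi-observable states if and only if it is observable or empty. -/

import Mathlib

/-- A state `q` of a DFA is *observable* if some word leads from it to an accepting state. -/
def ObsState {α σ : Type} (M : DFA α σ) (q : σ) : Prop :=
  ∃ w : List α, M.evalFrom q w ∈ M.accept

/-- A state is *semi-observable* if it is observable and some single input symbol
leads from it to a non-observable state. -/
def SemiObsState {α σ : Type} (M : DFA α σ) (q : σ) : Prop :=
  ObsState M q ∧ ∃ a : α, ¬ ObsState M (M.step q a)

/-- All states of the DFA are accessible from the start state. -/
def Accessible {α σ : Type} (M : DFA α σ) : Prop :=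
  ∀ q : σ, ∃ w : List α, M.eval w = q

/-- `L` is accepted by some (completely specified, accessible) DFA all of whose
states are observable.  This is membership in the family `O` over the alphabet `α`. -/
def AcceptsObservably (α : Type) (L : Language α) : Prop :=
  ∃ (σ : Type) (_ : Fintype σ) (M : DFA α σ),
    Accessible M ∧ (∀ q : σ, ObsState M q) ∧ M.accepts = L

/-- Membership in the family `T_k`: `L` is accepted by some accessible DFA with at
most `k` semi-observable states. -/
def InT (α : Type) (k : ℕ) (L : Language α) : Prop :=
  ∃ (σ : Type) (_ : Fintype σ) (M : DFA α σ),
    Accessible M ∧ M.accepts = L ∧ {q : σ | SemiObsState M q}.ncard ≤ k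

/-- The alphabet (the whole type `α`) is minimal for `L`: every letter occurs in some word of `L`. -/
def MinimalAlphabet {α : Type} (L : Language α) : Prop :=
  ∀ a : α, ∃ w ∈ L, a ∈ w

/-- `T₀ = O ∪ {∅}`. -/

lemma obs_evalFrom {α σ : Type} (M : DFA α σ) (hno : ∀ q : σ, ¬ SemiObsState M q)
    (q : σ) (hq : ObsState M q) (w : List α) : ObsState M (M.evalFrom q w) := by
  induction w generalizing q with
  | nil => simpa [DFA.evalFrom] using hq
  | cons a w ih =>
    have hstep : ObsState M (M.step q a) := by
      by_contra h
      exact hno q ⟨hq, a, h⟩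
    have : M.evalFrom q (a :: w) = M.evalFrom (M.step q a) w := rfl
    rw [this]
    exact ih _ hstep

theorem T0_eq_O_union_empty {α : Type} [Fintype α] (L : Language α) :
    InT α 0 L ↔ AcceptsObservably α L ∨ L = (0 : Language α) := by
  constructor
  · rintro ⟨σ, _, M, hacc, hL, hcard⟩
    have hempty : {q : σ | SemiObsState M q} = ∅ :=
      Set.ncard_eq_zero (Set.toFinite _) |>.mp (Nat.le_zero.mp hcard)
    have hno : ∀ q : σ, ¬ SemiObsState M q := by
      intro q hq
      exact absurd (hempty ▸ hq : q ∈ (∅ : Set σ)) (by simp)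
    by_cases hs : ObsState M M.start
    · left
      refine ⟨σ, ‹Fintype σ›, M, hacc, ?_, hL⟩
      intro q
      obtain ⟨w, hw⟩ := hacc q
      exact hw ▸ obs_evalFrom M hno M.start hs w
    · right
      rw [← hL]
      ext x
      simp only [DFA.mem_accepts]
      constructor
      · intro hx
        exact absurd ⟨x, hx⟩ hs
      · intro hx
        exact absurd hx (Set.notMem_empty x)
  · rintro (⟨σ, _, M, hacc, hobs, hL⟩ | rfl)
    · refine ⟨σ, ‹Fintype σ›, M, hacc, hL, ?_⟩
      have : {q : σ | SemiObsState M q} = ∅ := by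
        ext q
        simp only [Set.mem_setOf_eq, Set.mem_empty_iff_false, iff_false]
        rintro ⟨-, a, ha⟩
        exact ha (hobs _)
      simp [this]
    · refine ⟨Unit, inferInstance, ⟨fun _ _ => (), (), ∅⟩, fun q => ⟨[], rfl⟩, ?_, ?_⟩
      · ext x
        simp [DFA.mem_accepts]
      · have : {q : Unit | SemiObsState (⟨fun _ _ => (), (), (∅ : Set Unit)⟩ : DFA α Unit) q} = ∅ := by
          ext q
          simp [SemiObsState, ObsState]
        simp [this]
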